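/- Swap lemma: Let ρ : σ →* τ be an abstract execution of a round-based register protocol with visibility range v whose first-write order is p · R · R' · s, where p, s are sequences of registers, and R, R' are registers with round(R) > round(R') + v. Then there exists an abstract execution ρ' : σ →* τ (with the same initial and final configurations) whose first-write order is p · R' · R · s. -/

import Mathlib

open scoped Classical

/-- Actions of a round-based register protocol: round increment, read of value `x`
from register `α` of round `k - i`, and write of value `x` to register `α` of the
current round. -/
inductive Act (dim : ℕ) (D : Type) where
  | incr : Act dim D
  | read (i : ℕ) (α : Fin dim) (x : D) : Act dim D
  | write (α : Fin dim) (x : D) : Act dim D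

/-- A round-based register protocol. -/
structure Protocol (Q D : Type) (dim : ℕ) where
  q0 : Q
  d0 : D
  v : ℕ
  T : Set (Q × Act dim D × Q)
  read_le : ∀ q i α x q', (q, Act.read i α x, q') ∈ T → i ≤ v
  write_ne : ∀ q α x q', (q, Act.write α x, q') ∈ T → x ≠ d0

/-- A move: a transition together with the round on which it is performed. -/
abbrev Move (Q D : Type) (dim : ℕ) := (Q × Act dim D × Q) × ℕ

/-- A concrete configuration: a finitely supported multiset of locations and a
valuation of all registers. -/
structure Conc (Q D : Type) (dim : ℕ) where
  loc : (Q × ℕ) →₀ ℕ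
  reg : ℕ → Fin dim → D

variable {Q D : Type} {dim : ℕ}

/-- Value read from register `α` of round `k - i` (registers of negative rounds
hold the initial value). -/
def regVal (P : Protocol Q D dim) (γ : Conc Q D dim) (k i : ℕ) (α : Fin dim) : D :=
  if i ≤ k then γ.reg (k - i) α else P.d0

/-- Updating register `α` of round `k` to value `x`. -/
def updReg (r : ℕ → Fin dim → D) (k : ℕ) (α : Fin dim) (x : D) : ℕ → Fin dim → D :=
  fun k' α' => if k' = k ∧ α' = α then x else r k' α'

/-- Concrete step relation of a round-based register protocol. -/
inductive ConcStep [DecidableEq Q] (P : Protocol Q D dim) :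
    Conc Q D dim → Move Q D dim → Conc Q D dim → Prop where
  | incr {q q' : Q} {k : ℕ} {γ γ' : Conc Q D dim} :
      (q, Act.incr, q') ∈ P.T → 0 < γ.loc (q, k) →
      γ'.loc = γ.loc - Finsupp.single (q, k) 1 + Finsupp.single (q', k + 1) 1 →
      γ'.reg = γ.reg →
      ConcStep P γ ((q, Act.incr, q'), k) γ'
  | read {q q' : Q} {k i : ℕ} {α : Fin dim} {x : D} {γ γ' : Conc Q D dim} :
      (q, Act.read i α x, q') ∈ P.T → 0 < γ.loc (q, k) →
      regVal P γ k i α = x →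
      γ'.loc = γ.loc - Finsupp.single (q, k) 1 + Finsupp.single (q', k) 1 →
      γ'.reg = γ.reg →
      ConcStep P γ ((q, Act.read i α x, q'), k) γ'
  | write {q q' : Q} {k : ℕ} {α : Fin dim} {x : D} {γ γ' : Conc Q D dim} :
      (q, Act.write α x, q') ∈ P.T → 0 < γ.loc (q, k) →
      γ'.loc = γ.loc - Finsupp.single (q, k) 1 + Finsupp.single (q', k) 1 →
      γ'.reg = updReg γ.reg k α x →
      ConcStep P γ ((q, Act.write α x, q'), k) γ'

/-- Concrete reachability. -/
def ConcReach [DecidableEq Q] (P : Protocol Q D dim) : Conc Q D dim → Conc Q D dim → Prop :=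
  Relation.ReflTransGen (fun γ γ' => ∃ m, ConcStep P γ m γ')

/-- Initial concrete configuration with `n` processes. -/
noncomputable def Conc.init [DecidableEq Q] (P : Protocol Q D dim) (n : ℕ) : Conc Q D dim :=
  ⟨Finsupp.single (P.q0, 0) n, fun _ _ => P.d0⟩

/-- Number of processes of a concrete configuration. -/
def Conc.size (γ : Conc Q D dim) : ℕ := γ.loc.sum fun _ n => n

/-- Support of the location multiset of a concrete configuration. -/
def Conc.supp (γ : Conc Q D dim) : Set (Q × ℕ) := {l | 0 < γ.loc l}

/-- The set of non-blank registers of a concrete configuration. -/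
def Conc.nonBlank (P : Protocol Q D dim) (γ : Conc Q D dim) : Set (ℕ × Fin dim) :=
  {r | γ.reg r.1 r.2 ≠ P.d0}

/-- An abstract configuration: a set of locations and a set of written registers. -/
structure Abs (Q : Type) (dim : ℕ) where
  S : Set (Q × ℕ)
  W : Set (ℕ × Fin dim)

/-- Abstract step relation. -/
inductive AbsStep (P : Protocol Q D dim) :
    Abs Q dim → Move Q D dim → Abs Q dim → Prop where
  | incr {σ : Abs Q dim} {q q' : Q} {k : ℕ} :
      (q, Act.incr, q') ∈ P.T → (q, k) ∈ σ.S →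
      AbsStep P σ ((q, Act.incr, q'), k) ⟨σ.S ∪ {(q', k + 1)}, σ.W⟩
  | readBlank {σ : Abs Q dim} {q q' : Q} {k i : ℕ} {α : Fin dim} :
      (q, Act.read i α P.d0, q') ∈ P.T → (q, k) ∈ σ.S →
      (i ≤ k → (k - i, α) ∉ σ.W) →
      AbsStep P σ ((q, Act.read i α P.d0, q'), k) ⟨σ.S ∪ {(q', k)}, σ.W⟩
  | readVal {σ : Abs Q dim} {q q' q1 q2 : Q} {k i : ℕ} {α : Fin dim} {x : D} :
      x ≠ P.d0 → (q, Act.read i α x, q') ∈ P.T → (q, k) ∈ σ.S →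
      i ≤ k → (k - i, α) ∈ σ.W →
      (q1, Act.write α x, q2) ∈ P.T → (q1, k - i) ∈ σ.S → (q2, k - i) ∈ σ.S →
      AbsStep P σ ((q, Act.read i α x, q'), k) ⟨σ.S ∪ {(q', k)}, σ.W⟩
  | write {σ : Abs Q dim} {q q' : Q} {k : ℕ} {α : Fin dim} {x : D} :
      (q, Act.write α x, q') ∈ P.T → (q, k) ∈ σ.S →
      AbsStep P σ ((q, Act.write α x, q'), k) ⟨σ.S ∪ {(q', k)}, σ.W ∪ {(k, α)}⟩

/-- Abstract reachability. -/
def AbsReach (P : Protocol Q D dim) : Abs Q dim → Abs Q dim → Prop :=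
  Relation.ReflTransGen (fun σ σ' => ∃ m, AbsStep P σ m σ')

/-- The initial abstract configuration. -/
def Abs.init (P : Protocol Q D dim) : Abs Q dim := ⟨{(P.q0, 0)}, ∅⟩

/-- Abstract execution along a list of moves. -/
inductive AbsRun (P : Protocol Q D dim) : Abs Q dim → List (Move Q D dim) → Abs Q dim → Prop
  | nil (σ : Abs Q dim) : AbsRun P σ [] σ
  | cons {σ σ' σ'' : Abs Q dim} {m : Move Q D dim} {ms : List (Move Q D dim)} :
      AbsStep P σ m σ' → AbsRun P σ' ms σ'' → AbsRun P σ (m :: ms) σ''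

/-- First-write order of a schedule, given a set of already written registers. -/
noncomputable def fwo (W : Set (ℕ × Fin dim)) : List (Move Q D dim) → List (ℕ × Fin dim)
  | [] => []
  | ((_, Act.write α _, _), k) :: ms =>
      if (k, α) ∈ W then fwo W ms else (k, α) :: fwo (W ∪ {(k, α)}) ms
  | _ :: ms => fwo W ms

/-- Projection of a sequence of registers onto those whose round lies in `[k - v, k]`. -/
def winproj (v k : ℕ) (F : List (ℕ × Fin dim)) : List (ℕ × Fin dim) :=
  F.filter (fun r => decide (k - v ≤ r.1 ∧ r.1 ≤ k))

namespace SwapAux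

theorem Abs.ext' {a b : Abs Q dim} (hS : a.S = b.S) (hW : a.W = b.W) : a = b := by
  cases a; cases b; simp_all

def dst (m : Move Q D dim) : Q × ℕ :=
  match m with
  | ((_, Act.incr, q'), k) => (q', k + 1)
  | ((_, Act.read _ _ _, q'), k) => (q', k)
  | ((_, Act.write _ _, q'), k) => (q', k)

def wr (m : Move Q D dim) : Set (ℕ × Fin dim) :=
  match m with
  | ((_, Act.write α _, _), k) => {(k, α)}
  | _ => ∅

theorem mem_wr {m : Move Q D dim} {r : ℕ × Fin dim} (h : r ∈ wr m) : r.1 = m.2 := by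
  obtain ⟨⟨q, a, q'⟩, k⟩ := m
  cases a <;> simp [wr] at h ⊢
  subst h; rfl

theorem round_le_dst (m : Move Q D dim) : m.2 ≤ (dst m).2 := by
  obtain ⟨⟨q, a, q'⟩, k⟩ := m
  cases a <;> simp [dst]

theorem shape {P : Protocol Q D dim} {σ σ' : Abs Q dim} {m : Move Q D dim}
    (h : AbsStep P σ m σ') : σ'.S = σ.S ∪ {dst m} ∧ σ'.W = σ.W ∪ wr m := by
  cases h <;> simp [dst, wr]

theorem W_mono_step {P : Protocol Q D dim} {σ σ' : Abs Q dim} {m : Move Q D dim}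
    (h : AbsStep P σ m σ') : σ.W ⊆ σ'.W := by
  rw [(shape h).2]; exact Set.subset_union_left

theorem W_mono_run {P : Protocol Q D dim} {σ τ : Abs Q dim} {l : List (Move Q D dim)}
    (h : AbsRun P σ l τ) : σ.W ⊆ τ.W := by
  induction h with
  | nil => exact le_refl _
  | cons h _ ih => exact (W_mono_step h).trans ih

theorem step_read_le {P : Protocol Q D dim} {σ σ' : Abs Q dim} {q q' : Q} {i k : ℕ}
    {α : Fin dim} {x : D}
    (h : AbsStep P σ ((q, Act.read i α x, q'), k) σ') : i ≤ P.v := by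
  cases h with
  | readBlank ht _ _ => exact P.read_le _ _ _ _ _ ht
  | readVal _ ht _ _ _ _ _ _ => exact P.read_le _ _ _ _ _ ht

theorem step_readBlank {P : Protocol Q D dim} {σ σ' : Abs Q dim} {q q' : Q} {i k : ℕ}
    {α : Fin dim}
    (h : AbsStep P σ ((q, Act.read i α P.d0, q'), k) σ') (hik : i ≤ k) :
    (k - i, α) ∉ σ.W := by
  cases h with
  | readBlank _ _ hnb => exact hnb hik
  | readVal hx _ _ _ _ _ _ _ => exact absurd rfl hx


theorem mem_of_round_lt {S : Set (Q × ℕ)} {d l : Q × ℕ}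
    (h : l ∈ S ∪ {d}) (hlt : l.2 < d.2) : l ∈ S := by
  rcases h with h | h
  · exact h
  · simp only [Set.mem_singleton_iff] at h; subst h; omega

theorem step_mono {P : Protocol Q D dim} {σ σ' τ0 : Abs Q dim} {m : Move Q D dim}
    (h : AbsStep P σ m σ') (hS : σ.S ⊆ τ0.S) (hW : σ.W ⊆ τ0.W)
    (hRB : ∀ q q' i α k, m = ((q, Act.read i α P.d0, q'), k) → i ≤ k → (k - i, α) ∉ τ0.W) :
    ∃ σ2, AbsStep P τ0 m σ2 ∧ σ2.S = τ0.S ∪ {dst m} ∧ σ2.W = τ0.W ∪ wr m := by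
  cases h with
  | incr ht hq =>
      exact ⟨_, AbsStep.incr ht (hS hq), by simp [dst], by simp [wr]⟩
  | readBlank ht hq hnb =>
      exact ⟨_, AbsStep.readBlank ht (hS hq) (fun hik => hRB _ _ _ _ _ rfl hik),
        by simp [dst], by simp [wr]⟩
  | readVal hx ht hq hik hw ht2 h1 h2 =>
      exact ⟨_, AbsStep.readVal hx ht (hS hq) hik (hW hw) ht2 (hS h1) (hS h2),
        by simp [dst], by simp [wr]⟩
  | write ht hq =>
      exact ⟨_, AbsStep.write ht (hS hq), by simp [dst], by simp [wr]⟩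

theorem step_back {P : Protocol Q D dim} {σm σ' : Abs Q dim} {m : Move Q D dim}
    (h : AbsStep P σm m σ') (S : Set (Q × ℕ)) (d : Q × ℕ) (W : Set (ℕ × Fin dim))
    (hmS : σm.S = S ∪ {d}) (hWsub : W ⊆ σm.W)
    (hWr : ∀ r ∈ σm.W, r ∈ W ∨ m.2 < r.1) (hd : m.2 < d.2) :
    ∃ σ2, AbsStep P (⟨S, W⟩ : Abs Q dim) m σ2 ∧ σ2.S = S ∪ {dst m} ∧ σ2.W = W ∪ wr m := by
  cases h with
  | incr ht hq =>
      rw [hmS] at hq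
      exact ⟨_, AbsStep.incr (σ := ⟨S, W⟩) ht (mem_of_round_lt hq hd), by simp [dst], by simp [wr]⟩
  | readBlank ht hq hnb =>
      rw [hmS] at hq
      exact ⟨_, AbsStep.readBlank (σ := ⟨S, W⟩) ht (mem_of_round_lt hq hd)
        (fun hik hmem => hnb hik (hWsub hmem)), by simp [dst], by simp [wr]⟩
  | readVal hx ht hq hik hw ht2 h1 h2 =>
      rename_i q q' q1 q2 k i α x
      rw [hmS] at hq h1 h2
      have hw' : (k - i, α) ∈ W := by
        rcases hWr _ hw with h | h
        · exact h
        · simp at h; omega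
      refine ⟨_, AbsStep.readVal (σ := ⟨S, W⟩) hx ht (mem_of_round_lt hq hd) hik hw' ht2
        (mem_of_round_lt h1 ?_) (mem_of_round_lt h2 ?_), by simp [dst], by simp [wr]⟩
      · show k - i < d.2; have : k < d.2 := hd; omega
      · show k - i < d.2; have : k < d.2 := hd; omega
  | write ht hq =>
      rw [hmS] at hq
      exact ⟨_, AbsStep.write (σ := ⟨S, W⟩) ht (mem_of_round_lt hq hd), by simp [dst], by simp [wr]⟩

theorem commute {P : Protocol Q D dim} {σ σm σ' : Abs Q dim} {m1 m2 : Move Q D dim}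
    (h1 : AbsStep P σ m1 σm) (h2 : AbsStep P σm m2 σ') (hk : m2.2 < m1.2)
    (hw : ∀ q q' α x k, m2 = ((q, Act.write α x, q'), k) → (k, α) ∈ σ.W ∨ k + P.v < m1.2) :
    ∃ σm', AbsStep P σ m2 σm' ∧ AbsStep P σm' m1 σ' := by
  obtain ⟨hS1, hW1⟩ := shape h1
  obtain ⟨hS2', hW2'⟩ := shape h2
  have hback := step_back h2 σ.S (dst m1) σ.W hS1
    (hW1 ▸ Set.subset_union_left)
    (by
      rw [hW1]; rintro r (hr | hr)
      · exact Or.inl hr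
      · exact Or.inr (mem_wr hr ▸ hk))
    (lt_of_lt_of_le hk (round_le_dst m1))
  obtain ⟨σm', hstep2, hSm', hWm'⟩ := hback
  have hstep2' : AbsStep P σ m2 σm' := hstep2
  -- now move m1 after
  have hRB1 : ∀ q q' i α k, m1 = ((q, Act.read i α P.d0, q'), k) → i ≤ k → (k - i, α) ∉ σm'.W := by
    rintro q q' i α k rfl hik
    rw [hWm']
    rintro (hmem | hmem)
    · exact step_readBlank h1 hik hmem
    · -- hmem : (k - i, α) ∈ wr m2
      obtain ⟨⟨qa, a2, qb⟩, k2⟩ := m2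
      cases a2 with
      | incr => simp [wr] at hmem
      | read => simp [wr] at hmem
      | write α2 x2 =>
          simp only [wr, Set.mem_singleton_iff, Prod.mk.injEq] at hmem
          obtain ⟨hk2, hα⟩ := hmem
          rcases hw _ _ _ _ _ rfl with hmem' | hlt
          · subst hα
            exact step_readBlank h1 hik (by rwa [hk2])
          · have hiv : i ≤ P.v := step_read_le h1
            simp only at hlt hk
            omega
  obtain ⟨σ2, hstep1, hS2, hW2⟩ := step_mono h1 (hSm' ▸ Set.subset_union_left)
    (hWm' ▸ Set.subset_union_left) hRB1
  have heq : σ2 = σ' := by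
    refine Abs.ext' ?_ ?_
    · rw [hS2, hSm', hS2', hS1]; ext z; simp; tauto
    · rw [hW2, hWm', hW2', hW1]; ext z; simp; tauto
  exact ⟨σm', hstep2', heq ▸ hstep1⟩

theorem run_append {P : Protocol Q D dim} {σ σ1 τ : Abs Q dim}
    {l1 l2 : List (Move Q D dim)}
    (h1 : AbsRun P σ l1 σ1) (h2 : AbsRun P σ1 l2 τ) : AbsRun P σ (l1 ++ l2) τ := by
  induction h1 with
  | nil => simpa using h2
  | cons h _ ih => exact AbsRun.cons h (ih h2)

theorem run_snoc {P : Protocol Q D dim} {σ σ1 σ2 : Abs Q dim}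
    {l : List (Move Q D dim)} {m : Move Q D dim}
    (h1 : AbsRun P σ l σ1) (h2 : AbsStep P σ1 m σ2) : AbsRun P σ (l ++ [m]) σ2 :=
  run_append h1 (AbsRun.cons h2 (AbsRun.nil _))

def wAcc : List (Move Q D dim) → Set (ℕ × Fin dim) → Set (ℕ × Fin dim)
  | [], W => W
  | m :: l, W => wAcc l (W ∪ wr m)

theorem wAcc_run {P : Protocol Q D dim} {σ τ : Abs Q dim} {l : List (Move Q D dim)}
    (h : AbsRun P σ l τ) : wAcc l σ.W = τ.W := by
  induction h with
  | nil => rfl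
  | cons h _ ih =>
      rw [wAcc, ← (shape h).2]; exact ih

theorem wAcc_union (l : List (Move Q D dim)) (W A : Set (ℕ × Fin dim)) :
    wAcc l (W ∪ A) = wAcc l W ∪ A := by
  induction l generalizing W with
  | nil => rfl
  | cons m l ih =>
      rw [wAcc, wAcc, show W ∪ A ∪ wr m = W ∪ wr m ∪ A by ext z; simp; tauto, ih]

theorem subset_wAcc (l : List (Move Q D dim)) (W : Set (ℕ × Fin dim)) : W ⊆ wAcc l W := by
  induction l generalizing W with
  | nil => exact le_refl _
  | cons m l ih => exact Set.subset_union_left.trans (ih _)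

theorem union_eq_of_mem {A : Set (ℕ × Fin dim)} {r : ℕ × Fin dim} (h : r ∈ A) :
    A ∪ {r} = A := by ext z; simp; rintro rfl; exact h

theorem fwo_cons_of_wr_subset {m : Move Q D dim} {W : Set (ℕ × Fin dim)}
    {l : List (Move Q D dim)} (h : wr m ⊆ W) : fwo W (m :: l) = fwo W l := by
  obtain ⟨⟨q, a, q'⟩, k⟩ := m
  cases a with
  | incr => rfl
  | read => rfl
  | write α x =>
      have : (k, α) ∈ W := h (by simp [wr])
      simp [fwo, this]

theorem fwo_cons_fresh {q q' : Q} {α : Fin dim} {x : D} {k : ℕ} {W : Set (ℕ × Fin dim)}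
    {l : List (Move Q D dim)} (h : (k, α) ∉ W) :
    fwo W (((q, Act.write α x, q'), k) :: l) = (k, α) :: fwo (W ∪ {(k, α)}) l := by
  simp [fwo, h]

theorem fwo_append (l1 : List (Move Q D dim)) (W : Set (ℕ × Fin dim))
    (l2 : List (Move Q D dim)) :
    fwo W (l1 ++ l2) = fwo W l1 ++ fwo (wAcc l1 W) l2 := by
  induction l1 generalizing W with
  | nil => rfl
  | cons m l1 ih =>
      obtain ⟨⟨q, a, q'⟩, k⟩ := m
      cases a with
      | incr =>
          show fwo W (l1 ++ l2) = fwo W l1 ++ fwo (wAcc l1 (W ∪ wr _)) l2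
          simp only [wr, Set.union_empty]
          exact ih W
      | read i α x =>
          show fwo W (l1 ++ l2) = fwo W l1 ++ fwo (wAcc l1 (W ∪ wr _)) l2
          simp only [wr, Set.union_empty]
          exact ih W
      | write α x =>
          by_cases hmem : (k, α) ∈ W
          · have e1 : fwo W ((((q, Act.write α x, q'), k) :: l1) ++ l2) = fwo W (l1 ++ l2) :=
              fwo_cons_of_wr_subset (by simp [wr, hmem])
            have e2 : fwo W (((q, Act.write α x, q'), k) :: l1) = fwo W l1 :=
              fwo_cons_of_wr_subset (by simp [wr, hmem])
            rw [List.cons_append] at *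
            rw [e1, e2, ih W]
            congr 1
            show _ = fwo (wAcc l1 (W ∪ wr (((q, Act.write α x, q'), k) : Move Q D dim))) l2
            simp only [wr]
            rw [show W ∪ {(k, α)} = W from union_eq_of_mem hmem]
          · rw [List.cons_append, fwo_cons_fresh hmem, fwo_cons_fresh hmem, ih]
            show _ = _ ++ fwo (wAcc l1 (W ∪ wr (((q, Act.write α x, q'), k) : Move Q D dim))) l2
            simp only [wr, List.cons_append, List.cons.injEq, true_and]

theorem fwo_union_filter (l : List (Move Q D dim)) (W : Set (ℕ × Fin dim))
    (r : ℕ × Fin dim) :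
    fwo (W ∪ {r}) l = (fwo W l).filter (fun z => z ≠ r) := by
  induction l generalizing W with
  | nil => rfl
  | cons m l ih =>
      obtain ⟨⟨q, a, q'⟩, k⟩ := m
      cases a with
      | incr => exact ih W
      | read i α x => exact ih W
      | write α x =>
          by_cases hmem : (k, α) ∈ W
          · rw [fwo_cons_of_wr_subset (W := W ∪ {r}) (by simp [wr]; tauto),
              fwo_cons_of_wr_subset (by simp [wr, hmem])]
            exact ih W
          · by_cases hr : (k, α) = r
            · subst hr
              rw [fwo_cons_of_wr_subset (W := W ∪ {(k, α)}) (by simp [wr]),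
                fwo_cons_fresh hmem]
              have := ih (W ∪ {(k, α)})
              rw [show W ∪ {(k, α)} ∪ {(k, α)} = W ∪ {(k, α)} by rw [Set.union_assoc, Set.union_self]] at this
              simpa using this
            · have hmem' : (k, α) ∉ W ∪ {r} := by simp [hmem, hr]
              rw [fwo_cons_fresh hmem', fwo_cons_fresh hmem,
                show W ∪ {r} ∪ {(k, α)} = W ∪ {(k, α)} ∪ {r} by ext z; simp; tauto,
                ih (W ∪ {(k, α)})]
              simp [hr]

theorem pull_back {P : Protocol Q D dim} (m2 : Move Q D dim) :
    ∀ (l : List (Move Q D dim)) (σ σ1 σ2 : Abs Q dim),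
      AbsRun P σ l σ1 → AbsStep P σ1 m2 σ2 →
      (∀ m1 ∈ l, m2.2 < m1.2) →
      (∀ q q' α x k, m2 = ((q, Act.write α x, q'), k) →
        (k, α) ∈ σ.W ∨ ∀ m1 ∈ l, k + P.v < m1.2) →
      ∃ σa, AbsStep P σ m2 σa ∧ AbsRun P σa l σ2 := by
  intro l
  induction l with
  | nil =>
      intro σ σ1 σ2 hrun hstep _ _
      cases hrun
      exact ⟨σ2, hstep, AbsRun.nil _⟩
  | cons m1 l ih =>
      intro σ σ1 σ2 hrun hstep hr hw
      cases hrun with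
      | cons h1 hrest =>
          rename_i σmid
          obtain ⟨σa', hstep2, hrun2⟩ := ih σmid σ1 σ2 hrest hstep
            (fun m hm => hr m (List.mem_cons_of_mem _ hm))
            (by
              rintro q q' α x k rfl
              rcases hw _ _ _ _ _ rfl with hmem | hall
              · exact Or.inl (W_mono_step h1 hmem)
              · exact Or.inr (fun m hm => hall m (List.mem_cons_of_mem _ hm)))
          obtain ⟨σm', hs2, hs1⟩ := commute h1 hstep2 (hr m1 List.mem_cons_self)
            (by
              rintro q q' α x k rfl
              rcases hw _ _ _ _ _ rfl with hmem | hall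
              · exact Or.inl hmem
              · exact Or.inr (hall m1 List.mem_cons_self))
          exact ⟨σm', hs2, AbsRun.cons hs1 hrun2⟩

theorem core {P : Protocol Q D dim} (R R' : ℕ × Fin dim) (hv : R'.1 + P.v < R.1) :
    ∀ (rest : List (Move Q D dim)) (σ1 τ : Abs Q dim) (s : List (ℕ × Fin dim)),
      AbsRun P σ1 rest τ → fwo σ1.W rest = R' :: s →
      ∀ (σ : Abs Q dim) (pre : List (Move Q D dim)),
        AbsRun P σ pre σ1 → (∀ m ∈ pre, R.1 ≤ m.2) → fwo σ.W pre = [R] →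
        σ1.W = σ.W ∪ {R} →
        ∃ ms', AbsRun P σ ms' τ ∧ fwo σ.W ms' = R' :: R :: s := by
  intro rest
  induction rest with
  | nil =>
      intro σ1 τ s hrun hfwo
      cases hrun
      simp [fwo] at hfwo
  | cons m rest' ih =>
      intro σ1 τ s hrun hfwo σ pre hpre hround hfpre hWeq
      cases hrun with
      | cons h hr =>
        rename_i σ2
        by_cases hfresh : wr m ⊆ σ1.W
        · -- non-fresh move
          have hW2 : σ2.W = σ1.W := by
            rw [(shape h).2, Set.union_eq_self_of_subset_right hfresh]
          have hfwo' : fwo σ2.W rest' = R' :: s := by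
            rw [hW2, ← fwo_cons_of_wr_subset hfresh, hfwo]
          by_cases hk : R.1 ≤ m.2
          · -- high round: absorb into pre
            have hpre' : AbsRun P σ (pre ++ [m]) σ2 := run_snoc hpre h
            have hround' : ∀ m' ∈ pre ++ [m], R.1 ≤ m'.2 := by
              intro m' hm'
              rcases List.mem_append.1 hm' with hm' | hm'
              · exact hround m' hm'
              · simp at hm'; subst hm'; exact hk
            have hfpre' : fwo σ.W (pre ++ [m]) = [R] := by
              rw [fwo_append, hfpre, wAcc_run hpre, fwo_cons_of_wr_subset hfresh]
              simp [fwo]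
            exact ih σ2 τ s hr hfwo' σ (pre ++ [m]) hpre' hround' hfpre'
              (by rw [hW2, hWeq])
          · -- low round: pull m before pre
            push_neg at hk
            have hwrsub : wr m ⊆ σ.W := by
              intro r hrm
              have : r ∈ σ.W ∪ {R} := hWeq ▸ hfresh hrm
              rcases this with h' | h'
              · exact h'
              · exfalso
                simp only [Set.mem_singleton_iff] at h'
                have := mem_wr hrm
                subst h'
                omega
            obtain ⟨σa, ha, hruna⟩ := pull_back m pre σ σ1 σ2 hpre h
              (fun m1 hm1 => lt_of_lt_of_le hk (hround m1 hm1))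
              (by
                rintro q q' α x k rfl
                exact Or.inl (hwrsub (by simp [wr])))
            have hWa : σa.W = σ.W := by
              rw [(shape ha).2, Set.union_eq_self_of_subset_right hwrsub]
            obtain ⟨ms'', hrun'', hf''⟩ := ih σ2 τ s hr hfwo' σa pre hruna hround
              (by rw [hWa, hfpre])
              (by rw [hW2, hWeq, hWa])
            refine ⟨m :: ms'', AbsRun.cons ha hrun'', ?_⟩
            rw [fwo_cons_of_wr_subset hwrsub, ← hWa, hf'']
        · -- fresh write: this is mR'
          obtain ⟨⟨q, a, q2⟩, k⟩ := m
          cases a with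
          | incr => exact absurd (by simp [wr]) hfresh
          | read i α x => exact absurd (by simp [wr]) hfresh
          | write α x =>
            have hmem : (k, α) ∉ σ1.W := fun hmem => hfresh (by simp [wr, hmem])
            rw [fwo_cons_fresh hmem] at hfwo
            obtain ⟨hR', htail⟩ := List.cons.injEq .. ▸ hfwo
            have hkR' : k = R'.1 := by rw [← hR']
            obtain ⟨σa, ha, hruna⟩ := pull_back _ pre σ σ1 σ2 hpre h
              (fun m1 hm1 => by
                have := hround m1 hm1
                show k < m1.2
                omega)
              (by
                rintro qq qq' αα xx kk heq
                right
                intro m1 hm1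
                have := hround m1 hm1
                obtain ⟨h1, h2⟩ := Prod.mk.injEq .. ▸ heq
                omega)
            refine ⟨((q, Act.write α x, q2), k) :: (pre ++ rest'),
              AbsRun.cons ha (run_append hruna hr), ?_⟩
            have hmem0 : (k, α) ∉ σ.W := fun hm => hmem (W_mono_run hpre hm)
            rw [fwo_cons_fresh hmem0, fwo_append, hR']
            have hRne : R ≠ R' := by
              intro hEq
              rw [hEq] at hv
              omega
            have e1 : fwo (σ.W ∪ {R'}) pre = [R] := by
              rw [fwo_union_filter, hfpre]
              simp [hRne]
            have e2 : wAcc pre (σ.W ∪ {R'}) = σ1.W ∪ {R'} := by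
              rw [wAcc_union, wAcc_run hpre]
            rw [e1, e2, ← hR', htail]
            simp

theorem main {P : Protocol Q D dim} (R R' : ℕ × Fin dim) (hv : R'.1 + P.v < R.1) :
    ∀ {σ τ : Abs Q dim} {ms : List (Move Q D dim)}, AbsRun P σ ms τ →
      ∀ p s, fwo σ.W ms = p ++ R :: R' :: s →
      ∃ ms', AbsRun P σ ms' τ ∧ fwo σ.W ms' = p ++ R' :: R :: s := by
  intro σ τ ms hrun
  induction hrun with
  | nil =>
      intro p s h
      simp only [fwo] at h
      exact absurd h.symm (by simp)
  | cons h hr ih =>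
      rename_i σ σ' τ m ms'
      intro p s hf
      by_cases hfresh : wr m ⊆ σ.W
      · -- non-fresh move
        have hWeq : σ'.W = σ.W := by
          rw [(shape h).2, Set.union_eq_self_of_subset_right hfresh]
        rw [fwo_cons_of_wr_subset hfresh, ← hWeq] at hf
        obtain ⟨ms'', hrun'', hf''⟩ := ih p s hf
        refine ⟨m :: ms'', AbsRun.cons h hrun'', ?_⟩
        rw [fwo_cons_of_wr_subset hfresh, ← hWeq, hf'']
      · -- fresh write
        obtain ⟨⟨q, a, q2⟩, k⟩ := m
        cases a with
        | incr => exact absurd (by simp [wr]) hfresh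
        | read i α x => exact absurd (by simp [wr]) hfresh
        | write α x =>
          have hmem : (k, α) ∉ σ.W := fun hm => hfresh (by simp [wr, hm])
          rw [fwo_cons_fresh hmem] at hf
          have hW' : σ'.W = σ.W ∪ {(k, α)} := (shape h).2
          cases p with
          | nil =>
              simp only [List.nil_append] at hf
              obtain ⟨hR, htail⟩ := List.cons.injEq .. ▸ hf
              have htail' : fwo σ'.W ms' = R' :: s := by rw [hW']; exact htail
              refine core R R' hv ms' σ' τ s hr htail' σ [((q, Act.write α x, q2), k)]
                (AbsRun.cons h (AbsRun.nil _)) ?_ ?_ (by rw [hW', hR])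
              · intro m' hm'
                simp at hm'
                subst hm'
                show R.1 ≤ k
                rw [← hR]
              · rw [fwo_cons_fresh hmem, hR]
                simp [fwo]
          | cons p0 p' =>
              simp only [List.cons_append] at hf
              obtain ⟨hp0, htail⟩ := List.cons.injEq .. ▸ hf
              have htail' : fwo σ'.W ms' = p' ++ R :: R' :: s := by rw [hW', htail]
              obtain ⟨ms'', hrun'', hf''⟩ := ih p' s htail'
              refine ⟨((q, Act.write α x, q2), k) :: ms'', AbsRun.cons h hrun'', ?_⟩
              rw [fwo_cons_fresh hmem, ← hW', hf'', hp0]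
              simp

end SwapAux

/-- Swap lemma (Lemma A.3). -/
theorem swap_lemma {Q D : Type} {dim : ℕ}
    (P : Protocol Q D dim) (σ τ : Abs Q dim) (ms : List (Move Q D dim))
    (hrun : AbsRun P σ ms τ)
    (p s : List (ℕ × Fin dim)) (R R' : ℕ × Fin dim)
    (hround : R'.1 + P.v < R.1)
    (hfwo : fwo σ.W ms = p ++ R :: R' :: s) :
    ∃ ms' : List (Move Q D dim),
      AbsRun P σ ms' τ ∧ fwo σ.W ms' = p ++ R' :: R :: s := by
  obtain ⟨ms', h1, h2⟩ := SwapAux.main R R' hround hrun p s hfwo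
  exact ⟨ms', h1, h2⟩
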